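/- For a convenient presentation, equality of words in the presented group is generated by end-of-word rewriting. Precisely: let X be a finite type, inv : X → X an involution (inv (inv a) = a for all a), and R a set of triples in X × X × X. Let G be the presented group PresentedGroup S where S = { (FreeGroup.of a) * (FreeGroup.of b) * (FreeGroup.of c)⁻¹ | (a,b,c) ∈ R }, let ρ : X → G send a generator to its image, and assume ρ (inv a) = (ρ a)⁻¹ for every a : X. For a word w : List X let ev w denote the product in G of ρ applied to its entries. Let ~ be the smallest reflexive, symmetric, transitive relation on List X such that: (1) w ++ [a, b] ~ w ++ [c] for every w and every (a,b,c) ∈ R; (2) w ++ [a, inv a] ~ w for every w and a; (3) if v ~ w then v ++ [a] ~ w ++ [a] for every a. Then for all words v, w : List X one has v ~ w if and only if ev v = ev w. -/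
import Mathlib


/-- The relators of a *convenient* presentation determined by a set `R` of
triples of generators: each triple `(a, b, c)` contributes the relator
`a * b * c⁻¹`. -/
def convRels {X : Type*} (R : Set (X × X × X)) : Set (FreeGroup X) :=
  { w | ∃ a b c : X, (a, b, c) ∈ R ∧
        w = FreeGroup.of a * FreeGroup.of b * (FreeGroup.of c)⁻¹ }

/-- The smallest reflexive, symmetric, transitive relation on words generated by
end-of-word rewriting: (1) `w ++ [a, b] ~ w ++ [c]` for `(a,b,c) ∈ R`;
(2) `w ++ [a, inv a] ~ w`; (3) `v ~ w → v ++ [a] ~ w ++ [a]`. -/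
inductive WordRel {X : Type*} (inv : X → X) (R : Set (X × X × X)) :
    List X → List X → Prop
  | rel (w : List X) {a b c : X} :
      (a, b, c) ∈ R → WordRel inv R (w ++ [a, b]) (w ++ [c])
  | cancel (w : List X) (a : X) : WordRel inv R (w ++ [a, inv a]) w
  | snoc {v w : List X} :
      WordRel inv R v w → ∀ a : X, WordRel inv R (v ++ [a]) (w ++ [a])
  | refl (w : List X) : WordRel inv R w w
  | symm {v w : List X} : WordRel inv R v w → WordRel inv R w v
  | trans {u v w : List X} :
      WordRel inv R u v → WordRel inv R v w → WordRel inv R u w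

namespace AuxWR

variable {X : Type*} {inv : X → X} {R : Set (X × X × X)}

lemma append_left (u : List X) {v w : List X} (h : WordRel inv R v w) :
    WordRel inv R (u ++ v) (u ++ w) := by
  induction h with
  | rel w' hm => rw [← List.append_assoc, ← List.append_assoc]; exact .rel _ hm
  | cancel w' a => rw [← List.append_assoc]; exact .cancel _ a
  | snoc h a ih => rw [← List.append_assoc, ← List.append_assoc]; exact ih.snoc a
  | refl => exact .refl _
  | symm h ih => exact ih.symm
  | trans h1 h2 ih1 ih2 => exact ih1.trans ih2

lemma append_right {v w : List X} (h : WordRel inv R v w) (u : List X) :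
    WordRel inv R (v ++ u) (w ++ u) := by
  induction u using List.reverseRecOn with
  | nil => simpa using h
  | append_singleton t a ih =>
      rw [← List.append_assoc, ← List.append_assoc]; exact ih.snoc a

lemma append_congr {v v' w w' : List X} (h : WordRel inv R v v')
    (h' : WordRel inv R w w') : WordRel inv R (v ++ w) (v' ++ w') :=
  (append_right h w).trans (append_left v' h')

/-- formal inverse of a word -/
def invw (inv : X → X) (w : List X) : List X := (w.reverse).map inv

lemma mul_inv (w : List X) : WordRel inv R (w ++ invw inv w) [] := by
  induction w using List.reverseRecOn with
  | nil => exact .refl _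
  | append_singleton t a ih =>
      have h1 : WordRel inv R (t ++ [a, inv a]) t := .cancel t a
      have h2 := append_right h1 (invw inv t)
      have e : (t ++ [a]) ++ invw inv (t ++ [a]) = (t ++ [a, inv a]) ++ invw inv t := by
        simp [invw]
      rw [e]
      exact h2.trans ih

lemma invw_invw (hinv : ∀ a : X, inv (inv a) = a) (w : List X) :
    invw inv (invw inv w) = w := by
  have h : (inv ∘ inv) = id := funext hinv
  simp [invw, h]

lemma inv_mul (hinv : ∀ a : X, inv (inv a) = a) (w : List X) :
    WordRel inv R (invw inv w ++ w) [] := by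
  have := mul_inv (inv := inv) (R := R) (invw inv w)
  rwa [invw_invw hinv] at this

lemma invw_congr (hinv : ∀ a : X, inv (inv a) = a) {v w : List X}
    (h : WordRel inv R v w) : WordRel inv R (invw inv v) (invw inv w) := by
  have h1 : WordRel inv R (invw inv v) (invw inv v ++ (w ++ invw inv w)) := by
    have := append_left (invw inv v) (mul_inv (inv := inv) (R := R) w).symm
    simpa using this
  have h2 : WordRel inv R (invw inv v ++ (w ++ invw inv w))
      ((invw inv v ++ v) ++ invw inv w) := by
    rw [← List.append_assoc]
    exact append_right (append_left _ h.symm) _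
  have h3 : WordRel inv R ((invw inv v ++ v) ++ invw inv w) (invw inv w) := by
    have := append_right (inv_mul (R := R) hinv v) (invw inv w)
    simpa using this
  exact (h1.trans h2).trans h3

variable (inv R) in
def ws : Setoid (List X) :=
  ⟨WordRel inv R, ⟨.refl, .symm, .trans⟩⟩

variable (inv R) in
def Q (hinv : ∀ a : X, inv (inv a) = a) := Quotient (ws inv R)

variable {hinv : ∀ a : X, inv (inv a) = a}

instance : Group (Q inv R hinv) where
  mul := Quotient.map₂ (· ++ ·) fun _ _ h _ _ h' => append_congr h h'
  one := Quotient.mk _ []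
  inv := Quotient.map (invw inv) fun _ _ h => invw_congr hinv h
  mul_assoc a b c := by
    induction a using Quotient.ind
    induction b using Quotient.ind
    induction c using Quotient.ind
    exact congrArg (Quotient.mk _) (List.append_assoc _ _ _)
  one_mul a := by
    induction a using Quotient.ind
    rfl
  mul_one a := by
    induction a using Quotient.ind
    exact congrArg (Quotient.mk _) (List.append_nil _)
  inv_mul_cancel a := by
    induction a using Quotient.ind with
    | _ a => exact Quotient.sound (inv_mul hinv a)

variable (inv R hinv) in
def mk' (w : List X) : Q inv R hinv := Quotient.mk (ws inv R) w

lemma mk'_mul (v w : List X) :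
    mk' inv R hinv v * mk' inv R hinv w = mk' inv R hinv (v ++ w) := rfl

lemma mk'_inv (w : List X) :
    (mk' inv R hinv w)⁻¹ = mk' inv R hinv (invw inv w) := rfl

lemma mk'_one : (1 : Q inv R hinv) = mk' inv R hinv [] := rfl

end AuxWR

/-- For a convenient presentation, two words are related by end-of-word
rewriting iff they evaluate to equal elements of the presented group. -/
theorem wordRel_iff_eval_eq
    {X : Type} [Fintype X] (inv : X → X) (hinv : ∀ a : X, inv (inv a) = a)
    (R : Set (X × X × X))
    (hρ : ∀ a : X,
      (PresentedGroup.of (rels := convRels R) (inv a) : PresentedGroup (convRels R))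
        = (PresentedGroup.of (rels := convRels R) a)⁻¹)
    (v w : List X) :
    WordRel inv R v w ↔
      ((v.map fun a => (PresentedGroup.of (rels := convRels R) a :
          PresentedGroup (convRels R))).prod
        = (w.map fun a => (PresentedGroup.of (rels := convRels R) a :
          PresentedGroup (convRels R))).prod) := by
  set ρ : X → PresentedGroup (convRels R) := fun a => PresentedGroup.of a with hρdef
  have key : ∀ a b c : X, (a, b, c) ∈ R → ρ a * ρ b = ρ c := by
    intro a b c hm
    have h1 : PresentedGroup.mk (convRels R)
        (FreeGroup.of a * FreeGroup.of b * (FreeGroup.of c)⁻¹) = 1 :=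
      (QuotientGroup.eq_one_iff _).mpr
        (Subgroup.subset_normalClosure ⟨a, b, c, hm, rfl⟩)
    have h2 : ρ a * ρ b * (ρ c)⁻¹ = 1 := by
      simpa [ρ, PresentedGroup.of, map_mul] using h1
    group at h2 ⊢
    exact mul_inv_eq_one.mp h2
  constructor
  · intro h
    induction h with
    | rel w' hm =>
        simp only [List.map_append, List.prod_append, List.map_cons, List.map_nil,
          List.prod_cons, List.prod_nil, mul_one]
        rw [key _ _ _ hm]
    | cancel w' a =>
        simp only [List.map_append, List.prod_append, List.map_cons, List.map_nil,
          List.prod_cons, List.prod_nil, mul_one]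
        have h : ρ (inv a) = (ρ a)⁻¹ := hρ a
        rw [h]
        group
    | snoc h a ih => simp only [List.map_append, List.prod_append, ih]
    | refl => rfl
    | symm h ih => exact ih.symm
    | trans h1 h2 ih1 ih2 => exact ih1.trans ih2
  · intro h
    have hrels : ∀ r ∈ convRels R,
        FreeGroup.lift (fun a => AuxWR.mk' inv R hinv [a]) r = 1 := by
      rintro r ⟨a, b, c, hm, rfl⟩
      simp only [map_mul, map_inv, FreeGroup.lift_apply_of]
      rw [AuxWR.mk'_inv, AuxWR.mk'_mul, AuxWR.mk'_mul, AuxWR.mk'_one]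
      refine Quotient.sound ?_
      have h1 : WordRel inv R ([] ++ [a, b]) ([] ++ [c]) := .rel [] hm
      have h2 := h1.snoc (inv c)
      have h3 : WordRel inv R ([] ++ [c, inv c]) [] := .cancel [] c
      show WordRel inv R _ _
      simp only [List.nil_append] at h2 h3
      exact (show WordRel inv R ([a, b, inv c]) ([c, inv c]) by simpa using h2).trans h3
    set φ := PresentedGroup.toGroup hrels with hφdef
    have hφ : ∀ u : List X, φ ((u.map ρ).prod) = AuxWR.mk' inv R hinv u := by
      intro u
      induction u with
      | nil =>
          show φ (List.prod []) = _
          rw [List.prod_nil, map_one, AuxWR.mk'_one]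
      | cons a t ih =>
          rw [List.map_cons, List.prod_cons, map_mul, ih]
          have : φ (ρ a) = AuxWR.mk' inv R hinv [a] := PresentedGroup.toGroup.of hrels
          rw [this, AuxWR.mk'_mul]
          rfl
    have h2 := congrArg φ h
    rw [hφ v, hφ w] at h2
    exact Quotient.exact h2
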